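/- Let 0 ≤ s_1 ≤ ⋯ ≤ s_m be nonnegative integers, let T_0, …, T_{s_m−1} ∈ k(x)^{n×n}, and for 0 ≤ i ≤ s_m set T^{(i)} = T_0·T_1⋯T_{i−1} (with T^{(0)} = I). For any polynomial vectors u_1, …, u_m ∈ k[x]^n, the matrix K = [T^{(s_1)} u_1 | ⋯ | T^{(s_m)} u_m] ∈ k(x)^{n×m} satisfies: φ_ℓ(K) divides φ_ℓ(T_0)·φ_ℓ(T_1)⋯φ_ℓ(T_{s_m−1}) for all ℓ ≥ 0. -/

import Mathlib

open Polynomial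

noncomputable section

/-- Normalization on a field: every nonzero element normalizes to `1`. -/
noncomputable def fieldNormalizationMonoid (K : Type*) [Field K] : NormalizationMonoid K := by
  classical
  exact
  { normUnit := fun a => if h : a = 0 then 1 else (Units.mk0 a h)⁻¹
    normUnit_zero := dif_pos rfl
    normUnit_one := by
      rw [dif_neg one_ne_zero]
      exact Units.ext (by simp)
    normUnit_mul_units := fun {a} u ha => by
      rw [dif_neg (mul_ne_zero ha u.ne_zero), dif_neg ha]
      exact Units.ext (by
        simp only [Units.val_inv_eq_inv_val, Units.val_mk0, Units.val_mul]
        ring) }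

attribute [local instance] fieldNormalizationMonoid

noncomputable local instance (K : Type*) [Field K] : NormalizedGCDMonoid (Polynomial K) :=
  UniqueFactorizationMonoid.toNormalizedGCDMonoid _

variable {k : Type*} [Field k] [CharZero k]

/-- The ℓ-th determinantal denominator of a rational matrix: the monic least common
denominator of all minors of size at most ℓ. -/
def detDen {n p : ℕ} (R : Matrix (Fin n) (Fin p) (RatFunc k)) (ℓ : ℕ) : Polynomial k :=
  (Finset.range (ℓ + 1)).lcm fun i =>
    (Finset.univ : Finset ((Fin i ↪ Fin n) × (Fin i ↪ Fin p))).lcm fun fg =>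
      (Matrix.det fun a b => R (fg.1 a) (fg.2 b)).denom

theorem det_mul_rect {R : Type*} [CommRing R] {t n : ℕ}
    (A : Matrix (Fin t) (Fin n) R) (B : Matrix (Fin n) (Fin t) R) :
    (A * B).det = ∑ f : Fin t → Fin n, (A.submatrix id f).det * ∏ i, B (f i) i := by
  calc (A * B).det
      = ∑ f : Fin t → Fin n, ∑ σ : Equiv.Perm (Fin t),
          ((Equiv.Perm.sign σ : ℤ) : R) * ∏ i, A (σ i) (f i) * B (f i) i := by
        simp only [Matrix.det_apply', Matrix.mul_apply, Finset.prod_univ_sum, Finset.mul_sum,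
          Fintype.piFinset_univ]
        rw [Finset.sum_comm]
    _ = ∑ f : Fin t → Fin n, (A.submatrix id f).det * ∏ i, B (f i) i := by
        refine Finset.sum_congr rfl fun f _ => ?_
        rw [Matrix.det_apply', Finset.sum_mul]
        refine Finset.sum_congr rfl fun σ _ => ?_
        rw [Finset.prod_mul_distrib, mul_assoc]
        rfl

theorem weighted_cauchy_binet {R : Type*} [CommRing R] {t n : ℕ}
    (A : Matrix (Fin t) (Fin n) R) (B : Matrix (Fin n) (Fin t) R) :
    t.factorial • (A * B).det
      = ∑ γ : Fin t ↪ Fin n, (A.submatrix id ⇑γ).det * (B.submatrix ⇑γ id).det := by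
  classical
  have hg : ∀ f : Fin t → Fin n, ¬ Function.Injective f →
      (A.submatrix id f).det * ∏ i, B (f i) i = 0 := by
    intro f hf
    obtain ⟨i, j, hij, hne⟩ := Function.not_injective_iff.mp hf
    rw [Matrix.det_zero_of_column_eq hne (fun r => by simp [hij]), zero_mul]
  have step1 : (A * B).det = ∑ γ : Fin t ↪ Fin n, (A.submatrix id ⇑γ).det * ∏ i, B (γ i) i := by
    rw [det_mul_rect, ← Finset.sum_filter_of_ne
      (p := fun f : Fin t → Fin n => Function.Injective f)
      (fun f _ h => by by_contra hinj; exact h (hg f hinj))]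
    refine (Finset.sum_bij (fun (γ : Fin t ↪ Fin n) _ => ⇑γ) ?_ ?_ ?_ ?_).symm
    · intro γ _; simp [γ.injective]
    · intro γ _ γ' _ h; exact DFunLike.coe_injective h
    · intro f hf
      exact ⟨⟨f, (Finset.mem_filter.mp hf).2⟩, Finset.mem_univ _, rfl⟩
    · intro γ _; rfl
  have key : ∀ γ : Fin t ↪ Fin n, (A.submatrix id ⇑γ).det * (B.submatrix ⇑γ id).det
      = ∑ σ : Equiv.Perm (Fin t),
          (A.submatrix id (⇑γ ∘ ⇑σ)).det * ∏ i, B (γ (σ i)) i := by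
    intro γ
    rw [Matrix.det_apply' (B.submatrix ⇑γ id), Finset.mul_sum]
    refine Finset.sum_congr rfl fun σ _ => ?_
    have h1 : (A.submatrix id (⇑γ ∘ ⇑σ)).det
        = ((Equiv.Perm.sign σ : ℤ) : R) * (A.submatrix id ⇑γ).det := by
      rw [← Matrix.det_permute' σ (A.submatrix id ⇑γ), Matrix.submatrix_submatrix]
      simp
    rw [h1]
    ring_nf
    rfl
  calc t.factorial • (A * B).det
      = ∑ σ : Equiv.Perm (Fin t), (A * B).det := by
        rw [Finset.sum_const, Finset.card_univ, Fintype.card_perm, Fintype.card_fin]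
    _ = ∑ σ : Equiv.Perm (Fin t), ∑ γ : Fin t ↪ Fin n,
          (A.submatrix id (⇑γ ∘ ⇑σ)).det * ∏ i, B (γ (σ i)) i := by
        refine Finset.sum_congr rfl fun σ _ => ?_
        rw [step1]
        refine Fintype.sum_bijective (fun γ : Fin t ↪ Fin n => σ⁻¹.toEmbedding.trans γ)
          ?_ _ _ (fun γ => ?_)
        · refine Function.bijective_iff_has_inverse.mpr ⟨fun γ => σ.toEmbedding.trans γ, ?_, ?_⟩
          · intro γ; ext x; simp
          · intro γ; ext x; simp
        · have hc : ⇑((σ⁻¹).toEmbedding.trans γ) ∘ ⇑σ = ⇑γ := by ext x; simp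
          rw [hc]
          simp
    _ = ∑ γ : Fin t ↪ Fin n, (A.submatrix id ⇑γ).det * (B.submatrix ⇑γ id).det := by
        rw [Finset.sum_comm]
        exact Finset.sum_congr rfl fun γ _ => (key γ).symm


variable {K : Type*} [Field K]

/-- `x` times `d` is a polynomial. -/
def IsInt (x : RatFunc K) (d : Polynomial K) : Prop :=
  ∃ p : Polynomial K, x * algebraMap (Polynomial K) (RatFunc K) d = algebraMap _ _ p

theorem isInt_of_dvd {x : RatFunc K} {d e : Polynomial K} (h : IsInt x d) (hde : d ∣ e) :
    IsInt x e := by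
  obtain ⟨p, hp⟩ := h
  obtain ⟨c, rfl⟩ := hde
  exact ⟨p * c, by rw [map_mul, ← mul_assoc, hp, map_mul]⟩

theorem IsInt.mul {x y : RatFunc K} {d e : Polynomial K} (hx : IsInt x d) (hy : IsInt y e) :
    IsInt (x * y) (d * e) := by
  obtain ⟨p, hp⟩ := hx
  obtain ⟨q, hq⟩ := hy
  exact ⟨p * q, by rw [map_mul, map_mul, mul_mul_mul_comm, hp, hq]⟩

theorem isInt_sum {ι : Type*} (s : Finset ι) (f : ι → RatFunc K) (d : Polynomial K)
    (h : ∀ i ∈ s, IsInt (f i) d) : IsInt (∑ i ∈ s, f i) d := by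
  classical
  induction s using Finset.induction with
  | empty => exact ⟨0, by simp⟩
  | @insert x s' hx ih =>
    obtain ⟨p, hp⟩ := h x (Finset.mem_insert_self _ _)
    obtain ⟨q, hq⟩ := ih fun i hi => h i (Finset.mem_insert_of_mem hi)
    rw [Finset.sum_insert hx]
    exact ⟨p + q, by rw [add_mul, hp, hq, map_add]⟩

theorem isInt_self (x : RatFunc K) : IsInt x x.denom :=
  ⟨x.num, ((div_eq_iff (RatFunc.algebraMap_ne_zero x.denom_ne_zero)).mp
    (RatFunc.num_div_denom x)).symm⟩

theorem IsInt.algebraMap_mul (p : Polynomial K) {x : RatFunc K} {d : Polynomial K}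
    (h : IsInt x d) : IsInt (algebraMap (Polynomial K) (RatFunc K) p * x) d := by
  obtain ⟨q, hq⟩ := h
  exact ⟨p * q, by rw [mul_assoc, hq, map_mul]⟩

theorem IsInt.nsmul_cancel {x : RatFunc K} {d : Polynomial K} {m : ℕ} (hm : (m : K) ≠ 0)
    (h : IsInt (m • x) d) : IsInt x d := by
  obtain ⟨p, hp⟩ := h
  have hm' : (algebraMap (Polynomial K) (RatFunc K)) (Polynomial.C (m : K)) = (m : RatFunc K) := by
    rw [Polynomial.C_eq_natCast, map_natCast]
  have hne : ((m : RatFunc K)) ≠ 0 := by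
    rw [← hm']
    exact RatFunc.algebraMap_ne_zero (Polynomial.C_ne_zero.mpr hm)
  have hminv : (algebraMap (Polynomial K) (RatFunc K)) (Polynomial.C (m : K)⁻¹)
      = ((m : RatFunc K))⁻¹ := by
    refine eq_inv_of_mul_eq_one_left ?_
    rw [← hm', ← map_mul, ← Polynomial.C_mul, inv_mul_cancel₀ hm, Polynomial.C_1, map_one]
  refine ⟨Polynomial.C (m : K)⁻¹ * p, ?_⟩
  rw [map_mul, hminv, ← hp, smul_mul_assoc, nsmul_eq_mul, ← mul_assoc,
    inv_mul_cancel₀ hne, one_mul]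

theorem isInt_denom_dvd {x : RatFunc K} {d : Polynomial K} (h : IsInt x d) (hd : d ≠ 0) :
    x.denom ∣ d := by
  obtain ⟨p, hp⟩ := h
  rw [RatFunc.denom_dvd hd]
  exact ⟨p, by rw [eq_div_iff (RatFunc.algebraMap_ne_zero hd)]; exact hp⟩


theorem isInt_det_submatrix {n p : ℕ} (R : Matrix (Fin n) (Fin p) (RatFunc k)) {ℓ t : ℕ}
    (ht : t ≤ ℓ) (α : Fin t → Fin n) (γ : Fin t → Fin p) :
    IsInt (Matrix.det fun a b => R (α a) (γ b)) (detDen R ℓ) := by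
  by_cases hα : Function.Injective α
  · by_cases hγ : Function.Injective γ
    · refine isInt_of_dvd (isInt_self _) ?_
      refine dvd_trans ?_ (Finset.dvd_lcm (Finset.mem_range.mpr (by omega : t < ℓ + 1)))
      have h := Finset.dvd_lcm (s := Finset.univ)
        (b := ((⟨α, hα⟩, ⟨γ, hγ⟩) : (Fin t ↪ Fin n) × (Fin t ↪ Fin p)))
        (f := fun fg : (Fin t ↪ Fin n) × (Fin t ↪ Fin p) =>
          (Matrix.det fun a b => R (fg.1 a) (fg.2 b)).denom) (Finset.mem_univ _)
      exact h
    · obtain ⟨i, j, hij, hne⟩ := Function.not_injective_iff.mp hγ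
      erw [Matrix.det_zero_of_column_eq (M := fun a b => R (α a) (γ b)) hne
        (fun r => congrArg (R (α r)) hij)]
      exact ⟨0, by simp⟩
  · obtain ⟨i, j, hij, hne⟩ := Function.not_injective_iff.mp hα
    erw [Matrix.det_zero_of_row_eq (M := fun a b => R (α a) (γ b)) hne
      (funext fun r => congrArg (fun x => R x (γ r)) hij)]
    exact ⟨0, by simp⟩

theorem isInt_krylov {n : ℕ} (ℓ : ℕ) :
    ∀ (c t N : ℕ), t + N ≤ c → t ≤ ℓ →
      ∀ (T : ℕ → Matrix (Fin n) (Fin n) (RatFunc k)) (σ : Fin t → ℕ), (∀ b, σ b ≤ N) →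
      ∀ (v : Fin t → Fin n → Polynomial k) (α : Fin t → Fin n),
      IsInt (Matrix.det fun a b =>
          (((List.range (σ b)).map T).prod).mulVec
            (fun r => algebraMap (Polynomial k) (RatFunc k) (v b r)) (α a))
        (∏ i ∈ Finset.range N, detDen (T i) ℓ) := by
  intro c
  induction c with
  | zero =>
    intro t N htN hℓ T σ hσ v α
    have ht : t = 0 := by omega
    subst ht
    exact ⟨∏ i ∈ Finset.range N, detDen (T i) ℓ, by erw [Matrix.det_isEmpty, one_mul]⟩
  | succ c ih =>
    intro t N htN hℓ T σ hσ v α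
    cases t with
    | zero =>
      exact ⟨∏ i ∈ Finset.range N, detDen (T i) ℓ, by erw [Matrix.det_isEmpty, one_mul]⟩
    | succ t' =>
      by_cases h0 : ∃ b, σ b = 0
      · obtain ⟨b, hb⟩ := h0
        erw [Matrix.det_succ_column _ b]
        refine isInt_sum _ _ _ fun i _ => ?_
        have hcol : (((List.range (σ b)).map T).prod).mulVec
            (fun r => algebraMap (Polynomial k) (RatFunc k) (v b r)) (α i)
            = algebraMap (Polynomial k) (RatFunc k) (v b (α i)) := by
          rw [hb]
          simp [Matrix.one_mulVec]
        have hterm : (-1 : RatFunc k) ^ ((i : ℕ) + (b : ℕ)) *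
              ((((List.range (σ b)).map T).prod).mulVec
                (fun r => algebraMap (Polynomial k) (RatFunc k) (v b r)) (α i))
            = algebraMap (Polynomial k) (RatFunc k)
                ((-1 : Polynomial k) ^ ((i : ℕ) + (b : ℕ)) * v b (α i)) := by
          rw [hcol, map_mul, map_pow, map_neg, map_one]
        have hIH := ih t' N (by omega) (by omega) T (fun b' => σ (b.succAbove b'))
          (fun b' => hσ _) (fun b' => v (b.succAbove b')) (fun a => α (i.succAbove a))
        rw [hterm]
        exact IsInt.algebraMap_mul _ hIH
      · push_neg at h0
        obtain ⟨N', rfl⟩ : ∃ N', N = N' + 1 := by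
          have h1 := h0 0
          have h2 := hσ 0
          exact ⟨N - 1, by omega⟩
        set A : Matrix (Fin (t' + 1)) (Fin n) (RatFunc k) := (T 0).submatrix α id with hA
        set B : Matrix (Fin n) (Fin (t' + 1)) (RatFunc k) := fun r b =>
          (((List.range (σ b - 1)).map (fun i => T (i + 1))).prod).mulVec
            (fun r' => algebraMap (Polynomial k) (RatFunc k) (v b r')) r with hB
        have hM : (fun a b => (((List.range (σ b)).map T).prod).mulVec
            (fun r => algebraMap (Polynomial k) (RatFunc k) (v b r)) (α a)) = A * B := by
          funext a b
          have h1 : List.range (σ b) = 0 :: (List.range (σ b - 1)).map Nat.succ := by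
            conv_lhs => rw [show σ b = (σ b - 1) + 1 by have := h0 b; omega]
            exact List.range_succ_eq_map
          have h2 : (T ∘ Nat.succ) = fun i => T (i + 1) := rfl
          rw [h1, List.map_cons, List.prod_cons, List.map_map, h2, ← Matrix.mulVec_mulVec]
          rw [Matrix.mul_apply]
          simp [Matrix.mulVec, dotProduct, hA, hB]
        rw [hM]
        refine IsInt.nsmul_cancel (m := (t' + 1).factorial)
          (Nat.cast_ne_zero.mpr (Nat.factorial_ne_zero _)) ?_
        rw [weighted_cauchy_binet]
        refine isInt_of_dvd (isInt_sum _ _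
          ((detDen (T 0) ℓ) * ∏ i ∈ Finset.range N', detDen (T (i + 1)) ℓ) fun γ _ => ?_) ?_
        · refine IsInt.mul ?_ ?_
          · exact isInt_det_submatrix (T 0) hℓ α ⇑γ
          · exact ih (t' + 1) N' (by omega) hℓ (fun i => T (i + 1)) (fun b => σ b - 1)
              (fun b => show σ b - 1 ≤ N' by have := hσ b; have := h0 b; omega) v ⇑γ
        · rw [Finset.prod_range_succ']
          exact dvd_of_eq (mul_comm _ _)


/-- Determinantal denominators of pseudo-Krylov-type matrices, shift case: with
`T^{(i)} = T_0 ⋯ T_{i−1}` and `s_1 ≤ ⋯ ≤ s_m`, the matrix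
`K = [T^{(s_1)} u_1 | ⋯ | T^{(s_m)} u_m]` satisfies
`φ_ℓ(K) ∣ φ_ℓ(T_0) ⋯ φ_ℓ(T_{s_m−1})`. -/
theorem detDen_pseudoKrylov_prod {n m : ℕ}
    (T : ℕ → Matrix (Fin n) (Fin n) (RatFunc k))
    (s : Fin (m + 1) → ℕ) (hs : Monotone s)
    (u : Fin (m + 1) → Fin n → Polynomial k) (ℓ : ℕ) :
    detDen (Matrix.of fun i j =>
        (((List.range (s j)).map T).prod).mulVec
          (fun t => algebraMap (Polynomial k) (RatFunc k) (u j t)) i) ℓ ∣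
      ∏ i ∈ Finset.range (s (Fin.last m)), detDen (T i) ℓ := by
  by_cases hP : (∏ i ∈ Finset.range (s (Fin.last m)), detDen (T i) ℓ) = 0
  · rw [hP]
    exact dvd_zero _
  · rw [detDen]
    refine Finset.lcm_dvd fun i hi => Finset.lcm_dvd fun fg _ => ?_
    refine isInt_denom_dvd ?_ hP
    exact isInt_krylov ℓ (i + s (Fin.last m)) i (s (Fin.last m)) le_rfl
      (by have := Finset.mem_range.mp hi; omega) T (fun b => s (fg.2 b))
      (fun b => hs (Fin.le_last _)) (fun b => u (fg.2 b)) (fun a => fg.1 a)
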